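/- Let S be the semigroup generated by a finite set Σ of matrices in T^{n×n}, each with ρ(A) = 0, and suppose all generators have a common finite eigenvector u ∈ ℝ^n (A⊙u = u for all A ∈ Σ) lying in the intersection of their fundamental cells. Then every matrix P ∈ S is tropically non-singular, i.e., has tropical rank n. -/

import Mathlib

/-- The max-plus (tropical) semiring `T = ℝ ∪ {-∞}`. -/
abbrev T : Type := WithBot ℝ

/-- Tropical matrix product. -/
noncomputable def tmul {n m k : ℕ} (A : Fin n → Fin m → T) (B : Fin m → Fin k → T) :
    Fin n → Fin k → T :=
  fun i j => Finset.univ.sup fun l => A i l + B l j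

/-- Tropical matrix-vector product. -/
noncomputable def tmulVec {n m : ℕ} (A : Fin n → Fin m → T) (u : Fin m → T) : Fin n → T :=
  fun i => Finset.univ.sup fun j => A i j + u j

/-- Tropical identity matrix. -/
noncomputable def tId (n : ℕ) : Fin n → Fin n → T :=
  fun i j => if i = j then (0 : T) else ⊥

/-- Tropical matrix powers. -/
noncomputable def tpow {n : ℕ} (A : Fin n → Fin n → T) : ℕ → (Fin n → Fin n → T)
  | 0 => tId n
  | (m + 1) => tmul (tpow A m) A

/-- Tropical product of a list of matrices (empty product = identity). -/
noncomputable def tProd {n : ℕ} : List (Fin n → Fin n → T) → (Fin n → Fin n → T)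
  | [] => tId n
  | (M :: L) => tmul M (tProd L)

/-- Weight of a permutation. -/
noncomputable def wt {n : ℕ} (A : Fin n → Fin n → T) (σ : Equiv.Perm (Fin n)) : T :=
  ∑ i, A i (σ i)

/-- Tropical permanent. -/
noncomputable def per {n : ℕ} (A : Fin n → Fin n → T) : T :=
  Finset.univ.sup fun σ : Equiv.Perm (Fin n) => wt A σ

/-- Tropical non-singularity: finite permanent attained by a unique permutation. -/
def NonSingular {n : ℕ} (A : Fin n → Fin n → T) : Prop :=
  per A ≠ ⊥ ∧ ∃! σ : Equiv.Perm (Fin n), wt A σ = per A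

/-- Weight of the circuit `c 0 → c 1 → ⋯ → c ℓ → c 0` (length `ℓ+1`). -/
noncomputable def cwt {n ℓ : ℕ} (A : Fin n → Fin n → T) (c : Fin (ℓ + 1) → Fin n) : T :=
  ∑ k : Fin (ℓ + 1), A (c k) (c (k + 1))

/-- `ρ(A) = r`: some circuit has mean weight `r`, and every circuit has mean weight `≤ r`. -/
def RhoEq {n : ℕ} (A : Fin n → Fin n → T) (r : ℝ) : Prop :=
  (∃ ℓ, ∃ c : Fin (ℓ + 1) → Fin n, cwt A c = ((((ℓ : ℝ) + 1) * r : ℝ) : T)) ∧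
  ∀ ℓ, ∀ c : Fin (ℓ + 1) → Fin n, cwt A c ≤ ((((ℓ : ℝ) + 1) * r : ℝ) : T)

/-- `(i,j)` is an arc of the critical graph (lies on a circuit of mean weight `r = ρ(A)`). -/
def CritArc {n : ℕ} (A : Fin n → Fin n → T) (r : ℝ) (i j : Fin n) : Prop :=
  ∃ ℓ, ∃ c : Fin (ℓ + 1) → Fin n, cwt A c = ((((ℓ : ℝ) + 1) * r : ℝ) : T) ∧
    ∃ k : Fin (ℓ + 1), c k = i ∧ c (k + 1) = j

/-- `i` is a node of the critical graph. -/
def CritNode {n : ℕ} (A : Fin n → Fin n → T) (r : ℝ) (i : Fin n) : Prop :=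
  ∃ ℓ, ∃ c : Fin (ℓ + 1) → Fin n, cwt A c = ((((ℓ : ℝ) + 1) * r : ℝ) : T) ∧
    ∃ k : Fin (ℓ + 1), c k = i

/-- Reachability in the critical graph. -/
def CritReach {n : ℕ} (A : Fin n → Fin n → T) (r : ℝ) : Fin n → Fin n → Prop :=
  Relation.ReflTransGen (fun i j => CritArc A r i j)

/-- Same strongly connected component of the critical graph. -/
def SameScc {n : ℕ} (A : Fin n → Fin n → T) (r : ℝ) (i j : Fin n) : Prop :=
  CritReach A r i j ∧ CritReach A r j i

/-- `R` is a set of representatives, one per scc of the critical graph. -/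
def SccReps {n : ℕ} (A : Fin n → Fin n → T) (r : ℝ) (R : Finset (Fin n)) : Prop :=
  (∀ i ∈ R, CritNode A r i) ∧
  (∀ i ∈ R, ∀ j ∈ R, i ≠ j → ¬ SameScc A r i j) ∧
  (∀ j, CritNode A r j → ∃ i ∈ R, SameScc A r i j)

/-- Cyclicity of the scc of the critical graph containing `i`:
the gcd (greatest common divisor) of the lengths of the critical circuits through `i`. -/
noncomputable def cycAt {n : ℕ} (A : Fin n → Fin n → T) (r : ℝ) (i : Fin n) : ℕ :=
  sSup {d : ℕ | ∀ ℓ : ℕ,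
    (∃ c : Fin (ℓ + 1) → Fin n, cwt A c = ((((ℓ : ℝ) + 1) * r : ℝ) : T) ∧ c 0 = i) →
    d ∣ (ℓ + 1)}

/-- `A` has an `r × r` tropically non-singular submatrix. -/
def HasNSsub {n m : ℕ} (A : Fin n → Fin m → T) (r : ℕ) : Prop :=
  ∃ f : Fin r → Fin n, ∃ g : Fin r → Fin m,
    Function.Injective f ∧ Function.Injective g ∧
    NonSingular (fun i j => A (f i) (g j))

/-- Tropical rank: maximal size of a tropically non-singular square submatrix. -/
noncomputable def trrk {n m : ℕ} (A : Fin n → Fin m → T) : ℕ :=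
  sSup {r : ℕ | HasNSsub A r}

/-- Tropical convex hull (span) of a finite family of vectors of `T^n`. -/
def tSpan {n m : ℕ} (v : Fin m → (Fin n → T)) : Set (Fin n → T) :=
  { w | ∃ α : Fin m → T, w = fun i => Finset.univ.sup fun j => α j + v j i }

/-- Weak dimension of a tropically convex set: minimal size of a generating family. -/
noncomputable def weakDim {n : ℕ} (X : Set (Fin n → T)) : ℕ :=
  sInf {k : ℕ | ∃ v : Fin k → (Fin n → T), tSpan v = X}

/-- Column rank: weak dimension of the tropical convex hull of the columns. -/
noncomputable def colrk {n m : ℕ} (A : Fin n → Fin m → T) : ℕ :=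
  weakDim (tSpan fun j => fun i => A i j)

/-- Row rank: weak dimension of the tropical convex hull of the rows. -/
noncomputable def rowrk {n m : ℕ} (A : Fin n → Fin m → T) : ℕ :=
  weakDim (tSpan fun i => fun j => A i j)

section Stmt17Aux

open Finset

lemma Tadd_le_iff (a b : ℝ) (x : T) : x + (b : T) ≤ (a : T) ↔ x ≤ ((a - b : ℝ) : T) := by
  induction x using WithBot.recBotCoe with
  | bot => simp
  | coe r =>
      rw [← WithBot.coe_add, WithBot.coe_le_coe, WithBot.coe_le_coe]
      constructor <;> intro h <;> linarith

lemma Tadd_lt_iff (a b : ℝ) (x : T) : x + (b : T) < (a : T) ↔ x < ((a - b : ℝ) : T) := by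
  induction x using WithBot.recBotCoe with
  | bot => simp [WithBot.bot_lt_coe]
  | coe r =>
      rw [← WithBot.coe_add, WithBot.coe_lt_coe, WithBot.coe_lt_coe]
      constructor <;> intro h <;> linarith

lemma Tadd_eq_iff (a b : ℝ) (x : T) : x + (b : T) = (a : T) ↔ x = ((a - b : ℝ) : T) := by
  induction x using WithBot.recBotCoe with
  | bot => simp
  | coe r =>
      rw [← WithBot.coe_add, WithBot.coe_inj, WithBot.coe_inj]
      constructor <;> intro h <;> linarith

lemma Tadd_lt_left {x y : T} {a b : ℝ} (hx : x < (a : T)) (hy : y ≤ (b : T)) :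
    x + y < ((a + b : ℝ) : T) := by
  induction x using WithBot.recBotCoe with
  | bot => rw [WithBot.bot_add]; exact WithBot.bot_lt_coe _
  | coe r =>
      induction y using WithBot.recBotCoe with
      | bot => rw [WithBot.add_bot]; exact WithBot.bot_lt_coe _
      | coe s =>
          rw [← WithBot.coe_add, WithBot.coe_lt_coe]
          rw [WithBot.coe_lt_coe] at hx; rw [WithBot.coe_le_coe] at hy
          linarith

lemma Tadd_lt_right {x y : T} {a b : ℝ} (hx : x ≤ (a : T)) (hy : y < (b : T)) :
    x + y < ((a + b : ℝ) : T) := by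
  induction x using WithBot.recBotCoe with
  | bot => rw [WithBot.bot_add]; exact WithBot.bot_lt_coe _
  | coe r =>
      induction y using WithBot.recBotCoe with
      | bot => rw [WithBot.add_bot]; exact WithBot.bot_lt_coe _
      | coe s =>
          rw [← WithBot.coe_add, WithBot.coe_lt_coe]
          rw [WithBot.coe_le_coe] at hx; rw [WithBot.coe_lt_coe] at hy
          linarith

lemma Tadd_le_le {x y : T} {a b : ℝ} (hx : x ≤ (a : T)) (hy : y ≤ (b : T)) :
    x + y ≤ ((a + b : ℝ) : T) := by
  rw [WithBot.coe_add]; exact add_le_add hx hy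

lemma Tcoe_sum {ι : Type*} (s : Finset ι) (f : ι → ℝ) :
    ((∑ i ∈ s, f i : ℝ) : T) = ∑ i ∈ s, ((f i : ℝ) : T) := by
  classical
  induction s using Finset.cons_induction with
  | empty => simp
  | cons a s ha ih => rw [Finset.sum_cons, Finset.sum_cons, WithBot.coe_add, ih]

lemma Tsum_le {ι : Type*} (s : Finset ι) (f : ι → T) (g : ι → ℝ)
    (h : ∀ i ∈ s, f i ≤ ((g i : ℝ) : T)) :
    ∑ i ∈ s, f i ≤ ((∑ i ∈ s, g i : ℝ) : T) := by
  rw [Tcoe_sum]; exact Finset.sum_le_sum h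

lemma Tsum_lt {ι : Type*} (s : Finset ι) (f : ι → T) (g : ι → ℝ)
    (h : ∀ i ∈ s, f i ≤ ((g i : ℝ) : T))
    {i₀ : ι} (hi₀ : i₀ ∈ s) (hs : f i₀ < ((g i₀ : ℝ) : T)) :
    ∑ i ∈ s, f i < ((∑ i ∈ s, g i : ℝ) : T) := by
  classical
  rw [← Finset.sum_erase_add s f hi₀, ← Finset.sum_erase_add s g hi₀]
  exact Tadd_lt_right (Tsum_le _ _ _ fun i hi => h i (Finset.mem_of_mem_erase hi)) hs

/-- Key induction: every product of generators has a permutation `τ` with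
`P i (τ i) = u i - u (τ i)` and strict domination elsewhere. -/
lemma stmt17_key {n : ℕ} (Gen : Set (Fin n → Fin n → T))
    (hns : ∀ A ∈ Gen, NonSingular A)
    (u : Fin n → ℝ)
    (heig : ∀ A ∈ Gen, ∀ i, tmulVec A (fun j => ((u j : ℝ) : T)) i = ((u i : ℝ) : T))
    (hcell : ∀ A ∈ Gen, ∀ τ : Equiv.Perm (Fin n), wt A τ = per A →
      ∀ i : Fin n, ∀ j : Fin n, j ≠ τ i →
        A i j + ((u j : ℝ) : T) < A i (τ i) + ((u (τ i) : ℝ) : T)) :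
    ∀ L : List (Fin n → Fin n → T), (∀ M ∈ L, M ∈ Gen) →
      ∃ τ : Equiv.Perm (Fin n),
        (∀ i, tProd L i (τ i) = ((u i - u (τ i) : ℝ) : T)) ∧
        (∀ i j, j ≠ τ i → tProd L i j < ((u i - u j : ℝ) : T)) := by
  intro L
  induction L with
  | nil =>
      intro _
      refine ⟨Equiv.refl _, fun i => ?_, fun i j hj => ?_⟩
      · simp [tProd, tId]
      · simp only [tProd, tId, Equiv.refl_apply] at *
        rw [if_neg (by exact fun h => hj h.symm)]
        exact WithBot.bot_lt_coe _
  | cons M L ih =>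
      intro hmem
      have hM : M ∈ Gen := hmem M List.mem_cons_self
      obtain ⟨τQ, hQeq, hQlt⟩ := ih (fun N hN => hmem N (List.mem_cons_of_mem M hN))
      -- facts about the generator M
      obtain ⟨-, τM, hτM, -⟩ := hns M hM
      have hMstrict : ∀ i j, j ≠ τM i → M i j + ((u j : ℝ) : T) < M i (τM i) + ((u (τM i) : ℝ) : T) :=
        hcell M hM τM hτM
      have hMeq : ∀ i, M i (τM i) = ((u i - u (τM i) : ℝ) : T) := by
        intro i
        rw [← Tadd_eq_iff]
        have h1 := heig M hM i
        unfold tmulVec at h1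
        rw [← h1]
        refine le_antisymm (Finset.le_sup (f := fun j => M i j + ((u j : ℝ) : T)) (Finset.mem_univ (τM i))) (Finset.sup_le fun j _ => ?_)
        by_cases hj : j = τM i
        · rw [hj]
        · exact le_of_lt (hMstrict i j hj)
      have hMle : ∀ i j, M i j ≤ ((u i - u j : ℝ) : T) := by
        intro i j
        by_cases hj : j = τM i
        · rw [hj, hMeq i]
        · rw [← Tadd_le_iff]
          exact le_of_lt ((hMstrict i j hj).trans_eq (by rw [hMeq i, ← WithBot.coe_add]; norm_num))
      have hMlt : ∀ i j, j ≠ τM i → M i j < ((u i - u j : ℝ) : T) := by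
        intro i j hj
        rw [← Tadd_lt_iff]
        exact (hMstrict i j hj).trans_eq (by rw [hMeq i, ← WithBot.coe_add]; norm_num)
      have hQle : ∀ i j, tProd L i j ≤ ((u i - u j : ℝ) : T) := by
        intro i j
        by_cases hj : j = τQ i
        · rw [hj, hQeq i]
        · exact le_of_lt (hQlt i j hj)
      refine ⟨τM.trans τQ, fun i => ?_, fun i j hj => ?_⟩
      · simp only [Equiv.trans_apply]
        show Finset.univ.sup (fun l => M i l + tProd L l (τQ (τM i))) = _
        refine le_antisymm (Finset.sup_le fun l _ => ?_) ?_
        · calc M i l + tProd L l (τQ (τM i))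
              ≤ (((u i - u l) + (u l - u (τQ (τM i))) : ℝ) : T) :=
                Tadd_le_le (hMle i l) (hQle l _)
            _ = _ := by norm_num
        · have : M i (τM i) + tProd L (τM i) (τQ (τM i)) = ((u i - u (τQ (τM i)) : ℝ) : T) := by
            rw [hMeq i, hQeq (τM i), ← WithBot.coe_add]; norm_num
          rw [← this]
          exact Finset.le_sup (f := fun l => M i l + tProd L l (τQ (τM i))) (Finset.mem_univ (τM i))
      · simp only [Equiv.trans_apply] at hj
        show Finset.univ.sup (fun l => M i l + tProd L l j) < _
        rw [Finset.sup_lt_iff (WithBot.bot_lt_coe _)]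
        intro l _
        by_cases hl : l = τM i
        · have hjl : j ≠ τQ l := by rw [hl]; exact hj
          calc M i l + tProd L l j
              < (((u i - u l) + (u l - u j) : ℝ) : T) :=
                Tadd_lt_right (hMle i l) (hQlt l j hjl)
            _ = _ := by norm_num
        · calc M i l + tProd L l j
              < (((u i - u l) + (u l - u j) : ℝ) : T) :=
                Tadd_lt_left (hMlt i l hl) (hQle l j)
            _ = _ := by norm_num

end Stmt17Aux

/-- If all generators have `ρ = 0`, are non-singular, and share a common
finite eigenvector `u` lying in all their fundamental cells, then every product of
generators is tropically non-singular, i.e. has tropical rank `n`. -/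
theorem stmt17 {n : ℕ} (Gen : Set (Fin n → Fin n → T)) (hfin : Gen.Finite)
    (hrho : ∀ A ∈ Gen, RhoEq A 0)
    (hns : ∀ A ∈ Gen, NonSingular A)
    (u : Fin n → ℝ)
    (heig : ∀ A ∈ Gen, ∀ i, tmulVec A (fun j => ((u j : ℝ) : T)) i = ((u i : ℝ) : T))
    (hcell : ∀ A ∈ Gen, ∀ τ : Equiv.Perm (Fin n), wt A τ = per A →
      ∀ i : Fin n, ∀ j : Fin n, j ≠ τ i →
        A i j + ((u j : ℝ) : T) < A i (τ i) + ((u (τ i) : ℝ) : T)) :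
    ∀ L : List (Fin n → Fin n → T), L ≠ [] → (∀ M ∈ L, M ∈ Gen) →
      NonSingular (tProd L) ∧ trrk (tProd L) = n := by
  intro L _ hmemL
  obtain ⟨τ, hτeq, hτlt⟩ := stmt17_key Gen hns u heig hcell L hmemL
  have hle : ∀ σ : Equiv.Perm (Fin n), ∀ i,
      tProd L i (σ i) ≤ ((u i - u (σ i) : ℝ) : T) := by
    intro σ i
    by_cases h : σ i = τ i
    · rw [h]; exact le_of_eq (hτeq i)
    · exact le_of_lt (hτlt i _ h)
  have hsum0 : ∀ σ : Equiv.Perm (Fin n), ∑ i, (u i - u (σ i)) = (0 : ℝ) := by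
    intro σ
    rw [Finset.sum_sub_distrib, Equiv.sum_comp σ u, sub_self]
  have hwtτ : wt (tProd L) τ = (0 : T) := by
    unfold wt
    rw [Finset.sum_congr rfl (fun i _ => hτeq i), ← Tcoe_sum, hsum0 τ, WithBot.coe_zero]
  have hwt_lt : ∀ σ : Equiv.Perm (Fin n), σ ≠ τ → wt (tProd L) σ < (0 : T) := by
    intro σ hσ
    obtain ⟨i₀, hi₀⟩ : ∃ i, σ i ≠ τ i := by
      by_contra h; push_neg at h; exact hσ (Equiv.ext h)
    have := Tsum_lt Finset.univ (fun i => tProd L i (σ i)) (fun i => u i - u (σ i))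
      (fun i _ => hle σ i) (Finset.mem_univ i₀) (hτlt i₀ _ hi₀)
    unfold wt
    rw [hsum0 σ, WithBot.coe_zero] at this
    exact this
  have hwt_le : ∀ σ : Equiv.Perm (Fin n), wt (tProd L) σ ≤ (0 : T) := by
    intro σ
    by_cases h : σ = τ
    · rw [h, hwtτ]
    · exact le_of_lt (hwt_lt σ h)
  have hper : per (tProd L) = (0 : T) := by
    refine le_antisymm (Finset.sup_le fun σ _ => hwt_le σ) ?_
    rw [← hwtτ]
    exact Finset.le_sup (f := fun σ => wt (tProd L) σ) (Finset.mem_univ τ)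
  have hNS : NonSingular (tProd L) := by
    refine ⟨by rw [hper, ← WithBot.coe_zero]; exact WithBot.coe_ne_bot, τ,
      by show wt (tProd L) τ = per (tProd L); rw [hwtτ, hper], ?_⟩
    intro σ hσ
    by_contra hne
    rw [hper] at hσ
    exact absurd hσ (ne_of_lt (hwt_lt σ hne))
  refine ⟨hNS, ?_⟩
  have hsub : HasNSsub (tProd L) n :=
    ⟨id, id, fun a b h => h, fun a b h => h, hNS⟩
  have hub : ∀ r ∈ {r : ℕ | HasNSsub (tProd L) r}, r ≤ n := by
    rintro r ⟨f, g, hf, -, -⟩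
    simpa using Fintype.card_le_of_injective f hf
  exact le_antisymm (csSup_le ⟨n, hsub⟩ hub) (le_csSup ⟨n, hub⟩ hsub)
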